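/- Let n ≥ 1 and k ≥ 1. There is a constant C = C(n, k) such that for all x, y ∈ ℝⁿ with |x − y| > 1 and all t > 0, |tᵏ ∂ᵏ/∂tᵏ p_t(x, y)| ≤ C e^{−x₁ − y₁ − |x − y|} |x − y|^{(k − n)/2}, where p_t(x, y) = (4πt)^{−n/2} e^{−x₁−y₁} e^{−t} e^{−|x−y|²/(4t)}. -/

import Mathlib

open Real MeasureTheory

/-- The radial factor of the drift heat kernel: `exp(-(n/2) log t - t - b/t)`. -/
noncomputable def Gf (n : ℕ) (b t : ℝ) : ℝ := Real.exp (-(n : ℝ)/2 * Real.log t - t - b/t)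

/-- `v = -t + b/t`. -/
noncomputable def Vf (b t : ℝ) : ℝ := -t + b/t

/-- `w = t + b/t`. -/
noncomputable def Wf (b t : ℝ) : ℝ := t + b/t

/-- Evaluation of a monomial `(c, α, β) ↦ c vᵅ wᵝ`. -/
noncomputable def EvalT (b t : ℝ) (p : ℝ × ℕ × ℕ) : ℝ :=
  p.1 * Vf b t ^ p.2.1 * Wf b t ^ p.2.2

lemma hasDerivAt_bdiv (b t : ℝ) (ht : t ≠ 0) :
    HasDerivAt (fun s : ℝ => b / s) (b * -(t ^ 2)⁻¹) t := by
  simpa [div_eq_mul_inv] using (hasDerivAt_inv ht).const_mul b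

lemma hasDerivAt_Vf (b t : ℝ) (ht : t ≠ 0) :
    HasDerivAt (Vf b) (-(Wf b t) / t) t := by
  have h2 : HasDerivAt (fun s : ℝ => -s + b / s) (-1 + b * -(t ^ 2)⁻¹) t :=
    (hasDerivAt_id t).neg.add (hasDerivAt_bdiv b t ht)
  convert h2 using 1
  · rfl
  simp only [Wf]
  field_simp
  ring

lemma hasDerivAt_Wf (b t : ℝ) (ht : t ≠ 0) :
    HasDerivAt (Wf b) (-(Vf b t) / t) t := by
  have h2 : HasDerivAt (fun s : ℝ => s + b / s) (1 + b * -(t ^ 2)⁻¹) t :=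
    (hasDerivAt_id t).add (hasDerivAt_bdiv b t ht)
  convert h2 using 1
  · rfl
  simp only [Vf]
  field_simp
  ring

lemma hasDerivAt_Gf (n : ℕ) (b t : ℝ) (ht : t ≠ 0) :
    HasDerivAt (Gf n b) (Gf n b t * ((Vf b t - n/2) / t)) t := by
  have hlog : HasDerivAt Real.log t⁻¹ t := Real.hasDerivAt_log ht
  have hφ : HasDerivAt (fun s : ℝ => -(n : ℝ)/2 * Real.log s - s - b/s)
      (-(n : ℝ)/2 * t⁻¹ - 1 - b * -(t ^ 2)⁻¹) t :=
    ((hlog.const_mul (-(n : ℝ)/2)).sub (hasDerivAt_id t)).sub (hasDerivAt_bdiv b t ht)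
  have := hφ.exp
  convert this using 1
  · rfl
  simp only [Gf, Vf]
  field_simp
  ring

lemma hasDerivAt_list_sum {ι : Type*} (L : List ι) (f : ι → ℝ → ℝ) (f' : ι → ℝ) (t : ℝ)
    (h : ∀ p ∈ L, HasDerivAt (fun s => f p s) (f' p) t) :
    HasDerivAt (fun s => (L.map (fun p => f p s)).sum) ((L.map f').sum) t := by
  induction L with
  | nil => simpa using hasDerivAt_const t (0 : ℝ)
  | cons a l ih =>
      simp only [List.map_cons, List.sum_cons]
      exact (h a (by simp)).add (ih (fun p hp => h p (by simp [hp])))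

lemma list_abs_sum_le {ι : Type*} (L : List ι) (f : ι → ℝ) :
    |(L.map f).sum| ≤ (L.map (fun p => |f p|)).sum := by
  induction L with
  | nil => simp
  | cons a l ih =>
      simp only [List.map_cons, List.sum_cons]
      exact (abs_add_le _ _).trans (by linarith)

lemma hasDerivAt_term (b t c : ℝ) (α β : ℕ) (ht : t ≠ 0) :
    HasDerivAt (fun s => c * Vf b s ^ α * Wf b s ^ β)
      ((c * (-(α : ℝ) * Vf b t ^ (α - 1) * Wf b t ^ (β + 1)
          - (β : ℝ) * Vf b t ^ (α + 1) * Wf b t ^ (β - 1))) / t) t := by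
  have hv := hasDerivAt_Vf b t ht
  have hw := hasDerivAt_Wf b t ht
  have h := ((hv.fun_pow α).const_mul c).fun_mul (hw.fun_pow β)
  refine h.congr_deriv ?_
  field_simp
  ring

lemma combine_sums (n k : ℕ) (b t c₀ : ℝ) (ht : t ≠ 0) (L : List (ℝ × ℕ × ℕ)) :
    (c₀ * (Gf n b t * ((Vf b t - n/2) / t)) * t ^ (-(k : ℤ))
        + c₀ * Gf n b t * ((-(k : ℤ)) * t ^ (-(k : ℤ) - 1))) * (L.map (EvalT b t)).sum
      + c₀ * Gf n b t * t ^ (-(k : ℤ)) *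
        (L.map (fun p => (p.1 * (-(p.2.1 : ℝ) * Vf b t ^ (p.2.1 - 1) * Wf b t ^ (p.2.2 + 1)
            - (p.2.2 : ℝ) * Vf b t ^ (p.2.1 + 1) * Wf b t ^ (p.2.2 - 1))) / t)).sum
    = c₀ * Gf n b t * t ^ (-((k : ℤ) + 1)) *
        ((L.map (fun p => EvalT b t (p.1, p.2.1 + 1, p.2.2))).sum
          + (L.map (fun p => EvalT b t ((-(n : ℝ)/2 - k) * p.1, p.2.1, p.2.2))).sum
          + (L.map (fun p => EvalT b t (-(p.2.1 : ℝ) * p.1, p.2.1 - 1, p.2.2 + 1))).sum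
          + (L.map (fun p => EvalT b t (-(p.2.2 : ℝ) * p.1, p.2.1 + 1, p.2.2 - 1))).sum) := by
  have hz : t ^ (-(k : ℤ)) = t ^ (-((k : ℤ) + 1)) * t := by
    rw [← zpow_add_one₀ ht]
    congr 1
    ring
  have hz' : t ^ (-(k : ℤ) - 1) = t ^ (-((k : ℤ) + 1)) := by
    congr 1
    ring
  induction L with
  | nil => simp
  | cons p l ih =>
      obtain ⟨c, α, β⟩ := p
      simp only [EvalT, List.map_cons, List.sum_cons] at ih ⊢
      have hhead :
          (c₀ * (Gf n b t * ((Vf b t - n/2) / t)) * t ^ (-(k : ℤ))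
              + c₀ * Gf n b t * ((-(k : ℤ)) * t ^ (-(k : ℤ) - 1))) * (c * Vf b t ^ α * Wf b t ^ β)
            + c₀ * Gf n b t * t ^ (-(k : ℤ)) *
              ((c * (-(α : ℝ) * Vf b t ^ (α - 1) * Wf b t ^ (β + 1)
                  - (β : ℝ) * Vf b t ^ (α + 1) * Wf b t ^ (β - 1))) / t)
          = c₀ * Gf n b t * t ^ (-((k : ℤ) + 1)) *
              (c * Vf b t ^ (α + 1) * Wf b t ^ β
                + ((-(n : ℝ)/2 - k) * c) * Vf b t ^ α * Wf b t ^ β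
                + (-(α : ℝ) * c) * Vf b t ^ (α - 1) * Wf b t ^ (β + 1)
                + (-(β : ℝ) * c) * Vf b t ^ (α + 1) * Wf b t ^ (β - 1)) := by
        rw [hz, hz']
        field_simp
        push_cast
        ring
      linear_combination hhead + ih

lemma rep (n k : ℕ) : ∃ L : List (ℝ × ℕ × ℕ),
    (∀ p ∈ L, p.1 = 0 ∨ p.2.1 + 2 * p.2.2 ≤ k) ∧
    ∀ c₀ b t : ℝ, 0 < t →
      iteratedDeriv k (fun s => c₀ * Gf n b s) t
        = c₀ * Gf n b t * t ^ (-(k : ℤ)) * (L.map (EvalT b t)).sum := by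
  induction k with
  | zero =>
      refine ⟨[(1, 0, 0)], by simp, ?_⟩
      intro c₀ b t ht
      simp [EvalT, iteratedDeriv_zero]
  | succ k ih =>
      obtain ⟨L, hdeg, hrep⟩ := ih
      refine ⟨(L.map fun p => (p.1, p.2.1 + 1, p.2.2))
            ++ (L.map fun p => ((-(n : ℝ)/2 - k) * p.1, p.2.1, p.2.2))
            ++ (L.map fun p => (-(p.2.1 : ℝ) * p.1, p.2.1 - 1, p.2.2 + 1))
            ++ (L.map fun p => (-(p.2.2 : ℝ) * p.1, p.2.1 + 1, p.2.2 - 1)), ?_, ?_⟩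
      · intro q hq
        simp only [List.append_assoc, List.mem_append, List.mem_map] at hq
        rcases hq with ⟨p, hp, rfl⟩ | ⟨p, hp, rfl⟩ | ⟨p, hp, rfl⟩ | ⟨p, hp, rfl⟩
        · rcases hdeg p hp with h | h
          · exact Or.inl (by simp [h])
          · exact Or.inr (by dsimp only; omega)
        · rcases hdeg p hp with h | h
          · exact Or.inl (by simp [h])
          · exact Or.inr (by dsimp only; omega)
        · rcases hdeg p hp with h | h
          · exact Or.inl (by simp [h])
          · by_cases hα : p.2.1 = 0
            · exact Or.inl (by simp [hα])
            · exact Or.inr (by dsimp only; omega)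
        · rcases hdeg p hp with h | h
          · exact Or.inl (by simp [h])
          · by_cases hβ : p.2.2 = 0
            · exact Or.inl (by simp [hβ])
            · exact Or.inr (by dsimp only; omega)
      · intro c₀ b t ht
        have htne : t ≠ 0 := ne_of_gt ht
        have hev : iteratedDeriv k (fun s => c₀ * Gf n b s)
            =ᶠ[nhds t] (fun s => c₀ * Gf n b s * s ^ (-(k : ℤ)) * (L.map (EvalT b s)).sum) := by
          filter_upwards [Ioi_mem_nhds ht] with s hs
          exact hrep c₀ b s hs
        rw [iteratedDeriv_succ, hev.deriv_eq]
        have hG := (hasDerivAt_Gf n b t htne).const_mul c₀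
        have hz : HasDerivAt (fun s : ℝ => s ^ (-(k : ℤ))) ((-(k : ℤ)) * t ^ (-(k : ℤ) - 1)) t :=
          by simpa using hasDerivAt_zpow (-(k : ℤ)) t (Or.inl htne)
        have hS : HasDerivAt (fun s => (L.map (EvalT b s)).sum)
            ((L.map (fun p => (p.1 * (-(p.2.1 : ℝ) * Vf b t ^ (p.2.1 - 1) * Wf b t ^ (p.2.2 + 1)
                - (p.2.2 : ℝ) * Vf b t ^ (p.2.1 + 1) * Wf b t ^ (p.2.2 - 1))) / t)).sum) t := by
          apply hasDerivAt_list_sum L (fun p s => EvalT b s p)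
          intro p hp
          exact hasDerivAt_term b t p.1 p.2.1 p.2.2 htne
        have hΦ := (hG.fun_mul hz).fun_mul hS
        rw [hΦ.deriv]
        have hcast : (-((k + 1 : ℕ) : ℤ)) = -((k : ℤ) + 1) := by push_cast; ring
        rw [hcast]
        have := combine_sums n k b t c₀ htne L
        rw [this]
        congr 1
        simp only [List.map_append, List.sum_append, List.map_map]
        congr 1

lemma one_add_pow_le (m : ℕ) (x : ℝ) (hx : 0 ≤ x) :
    (1 + x) ^ m ≤ 2 ^ m * (1 + x ^ m) := by
  induction m with
  | zero => norm_num
  | succ m ih =>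
      have hkey : x + x ^ m ≤ 1 + x ^ (m + 1) := by
        rcases le_total x 1 with h | h
        · have h1 : x ^ m ≤ 1 := pow_le_one₀ hx h
          have h2 : x ^ (m + 1) = x ^ m * x := pow_succ x m
          nlinarith [pow_nonneg hx m]
        · have h1 : 1 ≤ x ^ m := one_le_pow₀ h
          have h2 : x ^ (m + 1) = x ^ m * x := pow_succ x m
          nlinarith
      have h3 : (1 + x) ^ (m + 1) = (1 + x) ^ m * (1 + x) := pow_succ _ m
      have h4 : (1 + x) ^ m * (1 + x) ≤ (2 ^ m * (1 + x ^ m)) * (1 + x) := by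
        apply mul_le_mul_of_nonneg_right ih (by linarith)
      have h5 : (2 ^ m * (1 + x ^ m)) * (1 + x) ≤ 2 ^ (m + 1) * (1 + x ^ (m + 1)) := by
        have h6 : (2:ℝ) ^ (m + 1) = 2 ^ m * 2 := pow_succ 2 m
        have h2 : x ^ (m + 1) = x ^ m * x := pow_succ x m
        nlinarith [mul_le_mul_of_nonneg_left hkey (by positivity : (0:ℝ) ≤ (2:ℝ) ^ m),
          pow_nonneg hx m, pow_pos (by norm_num : (0:ℝ) < 2) m]
      linarith

lemma pow_mul_exp_neg_le (m : ℕ) (x : ℝ) (hx : 0 ≤ x) :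
    x ^ m * Real.exp (-x) ≤ (Nat.factorial m : ℝ) := by
  have h1 : x ^ m / (Nat.factorial m : ℝ) ≤ Real.exp x := by
    calc x ^ m / (Nat.factorial m : ℝ) ≤ ∑ i ∈ Finset.range (m + 1), x ^ i / (Nat.factorial i : ℝ) := by
          apply Finset.single_le_sum (f := fun i => x ^ i / (Nat.factorial i : ℝ))
          · intro i _
            positivity
          · exact Finset.mem_range.2 (Nat.lt_succ_self m)
      _ ≤ Real.exp x := Real.sum_le_exp_of_nonneg hx _
  have hfac : (0:ℝ) < (Nat.factorial m : ℝ) := by positivity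
  have h2 : x ^ m ≤ (Nat.factorial m : ℝ) * Real.exp x := by
    rw [div_le_iff₀ hfac] at h1
    linarith [h1]
  have h3 : Real.exp x * Real.exp (-x) = 1 := by
    rw [← Real.exp_add]
    simp
  have h4 : x ^ m * Real.exp (-x) ≤ ((Nat.factorial m : ℝ) * Real.exp x) * Real.exp (-x) :=
    mul_le_mul_of_nonneg_right h2 (Real.exp_nonneg _)
  calc x ^ m * Real.exp (-x) ≤ ((Nat.factorial m : ℝ) * Real.exp x) * Real.exp (-x) := h4
    _ = (Nat.factorial m : ℝ) * (Real.exp x * Real.exp (-x)) := by ring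
    _ = (Nat.factorial m : ℝ) := by rw [h3, mul_one]

set_option maxHeartbeats 1000000 in
lemma termBound (n k α β : ℕ) (hab : α + 2 * β ≤ k) {r t : ℝ} (hr : 1 < r) (ht : 0 < t) :
    |Vf (r ^ 2 / 4) t| ^ α * Wf (r ^ 2 / 4) t ^ β * Gf n (r ^ 2 / 4) t ≤
      3 ^ n * 3 ^ (k + n) * 2 ^ (k + n) * (1 + (Nat.factorial (k + n) : ℝ))
        * Real.exp (-r) * Real.sqrt r ^ k / Real.sqrt r ^ n := by
  have hr0 : (0:ℝ) < r := lt_trans one_pos hr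
  obtain ⟨s, hs⟩ : ∃ s, s = Real.sqrt r := ⟨_, rfl⟩
  rw [← hs]
  have hs0 : 0 < s := hs ▸ Real.sqrt_pos.2 hr0
  have hs2 : s ^ 2 = r := hs ▸ Real.sq_sqrt hr0.le
  have hs1 : 1 < s := by nlinarith
  obtain ⟨U, hUdef⟩ : ∃ U, U = t + (r ^ 2 / 4) / t - r := ⟨_, rfl⟩
  have hUt : U * t = (t - r / 2) ^ 2 := by
    rw [hUdef]
    field_simp
    ring
  have hU0 : 0 ≤ U := by
    rcases lt_or_ge U 0 with h | h
    · exfalso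
      nlinarith [hUt, sq_nonneg (t - r / 2), mul_pos (neg_pos.2 h) ht]
    · exact h
  have hWeq : Wf (r ^ 2 / 4) t = r + U := by
    simp only [Wf, hUdef]
    ring
  have hV2 : Vf (r ^ 2 / 4) t ^ 2 = U ^ 2 + 2 * r * U := by
    simp only [Vf, hUdef]
    field_simp
    ring
  have hX0 : 0 ≤ s * (2 + 3 * U) := by positivity
  have hVle : |Vf (r ^ 2 / 4) t| ≤ s * (2 + 3 * U) := by
    apply abs_le_of_sq_le_sq _ hX0
    rw [hV2, mul_pow, hs2]
    nlinarith [mul_nonneg hr0.le hU0, mul_nonneg (mul_nonneg hr0.le hU0) hU0, sq_nonneg U]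
  have hW0 : 0 ≤ Wf (r ^ 2 / 4) t := by
    rw [hWeq]
    linarith
  have hWle : Wf (r ^ 2 / 4) t ≤ s ^ 2 * (1 + U) := by
    rw [hWeq, hs2]
    nlinarith
  have hGeq : Gf n (r ^ 2 / 4) t
      = Real.exp (-(n : ℝ)/2 * Real.log t) * (Real.exp (-r) * Real.exp (-U)) := by
    simp only [Gf]
    rw [← Real.exp_add, ← Real.exp_add]
    congr 1
    rw [hUdef]
    ring
  -- the crucial lower bound on t in terms of U and r
  have key : r ≤ 9 * (1 + U) ^ 2 * t := by
    have hE : 9 * (1 + U) ^ 2 * t = 9 * t + 18 * (U * t) + 9 * (U ^ 2 * t) := by ring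
    have hUUt : 0 ≤ U ^ 2 * t := mul_nonneg (sq_nonneg U) ht.le
    rcases le_or_gt t (r / 9) with h | h
    · have h7 : 7 * r / 18 ≤ r / 2 - t := by linarith
      have h8 : (7 * r / 18) ^ 2 ≤ (t - r / 2) ^ 2 := by nlinarith
      have hA : (7 * r / 18) ^ 2 = 49 * r ^ 2 / 324 := by ring
      have hr2 : r ≤ r ^ 2 := by nlinarith
      rw [hE]
      linarith [hUt, h8, hA, hr2, ht.le, hUUt]
    · have hUt0 : 0 ≤ U * t := mul_nonneg hU0 ht.le
      rw [hE]
      linarith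
  have hst : s ≤ 3 * (1 + U) * Real.sqrt t := by
    have h1 : Real.sqrt r ≤ Real.sqrt (9 * (1 + U) ^ 2 * t) := Real.sqrt_le_sqrt key
    have h2 : (9 * (1 + U) ^ 2 * t : ℝ) = (3 * (1 + U)) ^ 2 * t := by ring
    rw [h2, Real.sqrt_mul (by positivity), Real.sqrt_sq (by positivity)] at h1
    rw [hs]
    exact h1
  have htt : 0 < Real.sqrt t := Real.sqrt_pos.2 ht
  have hsqrt_t : Real.exp (-(1/2 : ℝ) * Real.log t) = (Real.sqrt t)⁻¹ := by
    rw [Real.sqrt_eq_rpow, Real.rpow_def_of_pos ht, ← Real.exp_neg]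
    congr 1
    ring
  have hinv : (Real.sqrt t)⁻¹ ≤ 3 * (1 + U) / s := by
    rw [inv_eq_one_div, div_le_div_iff₀ htt hs0]
    nlinarith [hst]
  have htfac : Real.exp (-(n : ℝ)/2 * Real.log t) ≤ (3 * (1 + U)) ^ n / s ^ n := by
    have hexp1 : Real.exp (-(n : ℝ)/2 * Real.log t)
        = (Real.exp (-(1/2 : ℝ) * Real.log t)) ^ n := by
      rw [← Real.exp_nat_mul]
      congr 1
      ring
    rw [hexp1, hsqrt_t, ← div_pow]
    exact pow_le_pow_left₀ (by positivity) hinv n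
  -- assemble
  rw [hGeq]
  have e0 : (0:ℝ) ≤ Real.exp (-r) * Real.exp (-U) := by positivity
  have t1 : |Vf (r ^ 2 / 4) t| ^ α ≤ (s * (2 + 3 * U)) ^ α :=
    pow_le_pow_left₀ (abs_nonneg _) hVle α
  have t2 : Wf (r ^ 2 / 4) t ^ β ≤ (s ^ 2 * (1 + U)) ^ β :=
    pow_le_pow_left₀ hW0 hWle β
  have big : |Vf (r ^ 2 / 4) t| ^ α * Wf (r ^ 2 / 4) t ^ β
        * (Real.exp (-(n : ℝ)/2 * Real.log t) * (Real.exp (-r) * Real.exp (-U)))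
      ≤ ((s * (2 + 3 * U)) ^ α * (s ^ 2 * (1 + U)) ^ β * ((3 * (1 + U)) ^ n / s ^ n))
        * (Real.exp (-r) * Real.exp (-U)) := by
    have hm1 : |Vf (r ^ 2 / 4) t| ^ α * Wf (r ^ 2 / 4) t ^ β
        ≤ (s * (2 + 3 * U)) ^ α * (s ^ 2 * (1 + U)) ^ β :=
      mul_le_mul t1 t2 (pow_nonneg hW0 β) (by positivity)
    have hm2 : |Vf (r ^ 2 / 4) t| ^ α * Wf (r ^ 2 / 4) t ^ β
          * Real.exp (-(n : ℝ)/2 * Real.log t)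
        ≤ (s * (2 + 3 * U)) ^ α * (s ^ 2 * (1 + U)) ^ β * ((3 * (1 + U)) ^ n / s ^ n) :=
      mul_le_mul hm1 htfac (Real.exp_nonneg _) (by positivity)
    calc |Vf (r ^ 2 / 4) t| ^ α * Wf (r ^ 2 / 4) t ^ β
          * (Real.exp (-(n : ℝ)/2 * Real.log t) * (Real.exp (-r) * Real.exp (-U)))
        = (|Vf (r ^ 2 / 4) t| ^ α * Wf (r ^ 2 / 4) t ^ β
            * Real.exp (-(n : ℝ)/2 * Real.log t)) * (Real.exp (-r) * Real.exp (-U)) := by ring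
      _ ≤ ((s * (2 + 3 * U)) ^ α * (s ^ 2 * (1 + U)) ^ β * ((3 * (1 + U)) ^ n / s ^ n))
            * (Real.exp (-r) * Real.exp (-U)) := mul_le_mul_of_nonneg_right hm2 e0
  refine big.trans ?_
  -- now a purely scalar estimate
  have hre : ((s * (2 + 3 * U)) ^ α * (s ^ 2 * (1 + U)) ^ β * ((3 * (1 + U)) ^ n / s ^ n))
        * (Real.exp (-r) * Real.exp (-U))
      = (3 ^ n * Real.exp (-r) * (s ^ n)⁻¹)
        * (s ^ (α + 2 * β) * ((2 + 3 * U) ^ α * (1 + U) ^ (β + n)) * Real.exp (-U)) := by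
    rw [pow_add, pow_add, mul_pow, mul_pow, mul_pow, pow_mul]
    field_simp
  rw [hre]
  have c1 : s ^ (α + 2 * β) ≤ s ^ k := pow_le_pow_right₀ hs1.le hab
  have c2a : (2 + 3 * U) ^ α ≤ 3 ^ α * (1 + U) ^ α := by
    rw [← mul_pow]
    exact pow_le_pow_left₀ (by linarith) (by linarith) α
  have hU1 : (1:ℝ) ≤ 1 + U := by linarith
  have c2 : (2 + 3 * U) ^ α * (1 + U) ^ (β + n) ≤ 3 ^ (k + n) * (1 + U) ^ (k + n) := by
    calc (2 + 3 * U) ^ α * (1 + U) ^ (β + n)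
        ≤ (3 ^ α * (1 + U) ^ α) * (1 + U) ^ (β + n) :=
          mul_le_mul_of_nonneg_right c2a (pow_nonneg (by linarith) _)
      _ = 3 ^ α * (1 + U) ^ (α + (β + n)) := by rw [pow_add]; ring
      _ ≤ 3 ^ (k + n) * (1 + U) ^ (k + n) :=
          mul_le_mul (pow_le_pow_right₀ (by norm_num) (by omega))
            (pow_le_pow_right₀ hU1 (by omega)) (pow_nonneg (by linarith) _) (by positivity)
  have c3 : (1 + U) ^ (k + n) * Real.exp (-U)
      ≤ 2 ^ (k + n) * (1 + (Nat.factorial (k + n) : ℝ)) := by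
    calc (1 + U) ^ (k + n) * Real.exp (-U)
        ≤ (2 ^ (k + n) * (1 + U ^ (k + n))) * Real.exp (-U) :=
          mul_le_mul_of_nonneg_right (one_add_pow_le (k + n) U hU0) (Real.exp_nonneg _)
      _ = 2 ^ (k + n) * (Real.exp (-U) + U ^ (k + n) * Real.exp (-U)) := by ring
      _ ≤ 2 ^ (k + n) * (1 + (Nat.factorial (k + n) : ℝ)) := by
          have h1 : Real.exp (-U) ≤ 1 := Real.exp_le_one_iff.2 (by linarith)
          have h2 := pow_mul_exp_neg_le (k + n) U hU0
          have h3 : (0:ℝ) ≤ 2 ^ (k + n) := by positivity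
          nlinarith
  have hA : s ^ (α + 2 * β) * ((2 + 3 * U) ^ α * (1 + U) ^ (β + n)) * Real.exp (-U)
      ≤ s ^ k * (3 ^ (k + n) * (2 ^ (k + n) * (1 + (Nat.factorial (k + n) : ℝ)))) := by
    calc s ^ (α + 2 * β) * ((2 + 3 * U) ^ α * (1 + U) ^ (β + n)) * Real.exp (-U)
        ≤ (s ^ k * (3 ^ (k + n) * (1 + U) ^ (k + n))) * Real.exp (-U) := by
          apply mul_le_mul_of_nonneg_right _ (Real.exp_nonneg _)
          exact mul_le_mul c1 c2 (by positivity) (pow_nonneg hs0.le _)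
      _ = (s ^ k * 3 ^ (k + n)) * ((1 + U) ^ (k + n) * Real.exp (-U)) := by ring
      _ ≤ (s ^ k * 3 ^ (k + n)) * (2 ^ (k + n) * (1 + (Nat.factorial (k + n) : ℝ))) := by
          apply mul_le_mul_of_nonneg_left c3
          positivity
      _ = s ^ k * (3 ^ (k + n) * (2 ^ (k + n) * (1 + (Nat.factorial (k + n) : ℝ)))) := by ring
  calc (3 ^ n * Real.exp (-r) * (s ^ n)⁻¹)
        * (s ^ (α + 2 * β) * ((2 + 3 * U) ^ α * (1 + U) ^ (β + n)) * Real.exp (-U))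
      ≤ (3 ^ n * Real.exp (-r) * (s ^ n)⁻¹)
        * (s ^ k * (3 ^ (k + n) * (2 ^ (k + n) * (1 + (Nat.factorial (k + n) : ℝ))))) := by
        apply mul_le_mul_of_nonneg_left hA
        positivity
    _ = 3 ^ n * 3 ^ (k + n) * 2 ^ (k + n) * (1 + (Nat.factorial (k + n) : ℝ))
        * Real.exp (-r) * s ^ k / s ^ n := by
        field_simp

set_option maxHeartbeats 1000000 in
theorem stmt18 (n : ℕ) (hn : 0 < n) (k : ℕ) (hk : 1 ≤ k) :
    ∃ C : ℝ, 0 < C ∧ ∀ x y : EuclideanSpace ℝ (Fin n), ‖x - y‖ > 1 → ∀ t : ℝ, 0 < t →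
      |t ^ k * iteratedDeriv k
          (fun s => (4 * π * s) ^ (-(n : ℝ) / 2) * Real.exp (-x ⟨0, hn⟩ - y ⟨0, hn⟩) *
            Real.exp (-s) * Real.exp (-‖x - y‖ ^ 2 / (4 * s))) t| ≤
        C * Real.exp (-x ⟨0, hn⟩ - y ⟨0, hn⟩ - ‖x - y‖) * ‖x - y‖ ^ (((k : ℝ) - n) / 2) := by
  obtain ⟨L, hdeg, hrep⟩ := rep n k
  have hM0 : (0:ℝ) ≤ (L.map (fun p => |p.1|)).sum := by
    apply List.sum_nonneg
    intro a ha
    simp only [List.mem_map] at ha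
    obtain ⟨p, _, rfl⟩ := ha
    exact abs_nonneg _
  obtain ⟨M, hMdef⟩ : ∃ M, M = (L.map (fun p => |p.1|)).sum := ⟨_, rfl⟩
  obtain ⟨Cb, hCbdef⟩ : ∃ Cb : ℝ,
      Cb = 3 ^ n * 3 ^ (k + n) * 2 ^ (k + n) * (1 + (Nat.factorial (k + n) : ℝ)) := ⟨_, rfl⟩
  have hCb0 : 0 < Cb := by rw [hCbdef]; positivity
  have hM0' : 0 ≤ M := hMdef ▸ hM0
  refine ⟨(4 * π) ^ (-(n : ℝ) / 2) * (M * Cb) + 1, ?_, ?_⟩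
  · have h1 : (0:ℝ) ≤ (4 * π) ^ (-(n : ℝ) / 2) * (M * Cb) := by
      apply mul_nonneg (Real.rpow_nonneg (by positivity) _)
      exact mul_nonneg hM0' hCb0.le
    linarith
  intro x y hxy t ht
  obtain ⟨r, hrdef⟩ : ∃ r, r = ‖x - y‖ := ⟨_, rfl⟩
  rw [← hrdef] at hxy ⊢
  have hr1 : 1 < r := hxy
  have hr0 : (0:ℝ) < r := lt_trans one_pos hr1
  obtain ⟨c₀, hc₀def⟩ : ∃ c₀ : ℝ,
      c₀ = (4 * π) ^ (-(n : ℝ) / 2) * Real.exp (-x ⟨0, hn⟩ - y ⟨0, hn⟩) := ⟨_, rfl⟩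
  have hc₀0 : 0 < c₀ := by
    rw [hc₀def]
    apply mul_pos _ (Real.exp_pos _)
    exact Real.rpow_pos_of_pos (by positivity) _
  have htne : t ≠ 0 := ne_of_gt ht
  -- the statement's function agrees with c₀ * Gf n (r²/4) near t
  have hfeq : (fun s => (4 * π * s) ^ (-(n : ℝ) / 2) * Real.exp (-x ⟨0, hn⟩ - y ⟨0, hn⟩) *
        Real.exp (-s) * Real.exp (-r ^ 2 / (4 * s)))
      =ᶠ[nhds t] (fun s => c₀ * Gf n (r ^ 2 / 4) s) := by
    filter_upwards [Ioi_mem_nhds ht] with u hu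
    have hu0 : (0:ℝ) < u := hu
    have h1 : (4 * π * u : ℝ) ^ (-(n : ℝ) / 2)
        = (4 * π) ^ (-(n : ℝ) / 2) * u ^ (-(n : ℝ) / 2) := by
      rw [Real.mul_rpow (by positivity) hu0.le]
    have h2 : (u : ℝ) ^ (-(n : ℝ) / 2) = Real.exp (Real.log u * (-(n : ℝ) / 2)) :=
      Real.rpow_def_of_pos hu0 _
    rw [h1, h2, hc₀def]
    simp only [Gf]
    rw [show Real.exp (-(n : ℝ)/2 * Real.log u - u - (r ^ 2 / 4) / u)
        = Real.exp (Real.log u * (-(n : ℝ) / 2)) * Real.exp (-u) * Real.exp (-r ^ 2 / (4 * u)) by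
      rw [← Real.exp_add, ← Real.exp_add]
      congr 1
      field_simp
      ring]
    ring
  have hiter : iteratedDeriv k (fun s => (4 * π * s) ^ (-(n : ℝ) / 2)
        * Real.exp (-x ⟨0, hn⟩ - y ⟨0, hn⟩) * Real.exp (-s) * Real.exp (-r ^ 2 / (4 * s))) t
      = c₀ * Gf n (r ^ 2 / 4) t * t ^ (-(k : ℤ)) * (L.map (EvalT (r ^ 2 / 4) t)).sum :=
    (hfeq.iteratedDeriv_eq k).trans (hrep c₀ (r ^ 2 / 4) t ht)
  rw [hiter]
  have htk : (t : ℝ) ^ k * (c₀ * Gf n (r ^ 2 / 4) t * t ^ (-(k : ℤ))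
        * (L.map (EvalT (r ^ 2 / 4) t)).sum)
      = c₀ * Gf n (r ^ 2 / 4) t * (L.map (EvalT (r ^ 2 / 4) t)).sum := by
    have h1 : (t : ℝ) ^ k * t ^ (-(k : ℤ)) = 1 := by
      rw [← zpow_natCast t k, ← zpow_add₀ htne]
      simp
    calc (t : ℝ) ^ k * (c₀ * Gf n (r ^ 2 / 4) t * t ^ (-(k : ℤ))
          * (L.map (EvalT (r ^ 2 / 4) t)).sum)
        = ((t : ℝ) ^ k * t ^ (-(k : ℤ))) * (c₀ * Gf n (r ^ 2 / 4) t
            * (L.map (EvalT (r ^ 2 / 4) t)).sum) := by ring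
      _ = c₀ * Gf n (r ^ 2 / 4) t * (L.map (EvalT (r ^ 2 / 4) t)).sum := by
          rw [h1, one_mul]
  rw [htk]
  have hG0 : 0 < Gf n (r ^ 2 / 4) t := Real.exp_pos _
  rw [abs_mul, abs_mul, abs_of_pos hc₀0, abs_of_pos hG0]
  -- bound the sum
  have hW0 : 0 ≤ Wf (r ^ 2 / 4) t := add_nonneg ht.le (div_nonneg (by positivity) ht.le)
  obtain ⟨B, hBdef⟩ : ∃ B : ℝ, B = Cb * Real.exp (-r) * Real.sqrt r ^ k / Real.sqrt r ^ n :=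
    ⟨_, rfl⟩
  have hB0 : 0 ≤ B := by
    rw [hBdef, hCbdef]
    positivity
  have hterm : ∀ p ∈ L, Gf n (r ^ 2 / 4) t * |EvalT (r ^ 2 / 4) t p| ≤ |p.1| * B := by
    intro p hp
    have habs : |EvalT (r ^ 2 / 4) t p|
        = |p.1| * (|Vf (r ^ 2 / 4) t| ^ p.2.1 * Wf (r ^ 2 / 4) t ^ p.2.2) := by
      simp only [EvalT, abs_mul, abs_pow, abs_of_nonneg hW0]
      ring
    rcases hdeg p hp with h0 | hle
    · simp [habs, h0]
    · have h2 := termBound n k p.2.1 p.2.2 hle hr1 ht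
      rw [← hCbdef, ← hBdef] at h2
      calc Gf n (r ^ 2 / 4) t * |EvalT (r ^ 2 / 4) t p|
          = |p.1| * (|Vf (r ^ 2 / 4) t| ^ p.2.1 * Wf (r ^ 2 / 4) t ^ p.2.2
              * Gf n (r ^ 2 / 4) t) := by rw [habs]; ring
        _ ≤ |p.1| * B := mul_le_mul_of_nonneg_left h2 (abs_nonneg _)
  have hsum : Gf n (r ^ 2 / 4) t * |(L.map (EvalT (r ^ 2 / 4) t)).sum| ≤ M * B := by
    calc Gf n (r ^ 2 / 4) t * |(L.map (EvalT (r ^ 2 / 4) t)).sum|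
        ≤ Gf n (r ^ 2 / 4) t * (L.map (fun p => |EvalT (r ^ 2 / 4) t p|)).sum :=
          mul_le_mul_of_nonneg_left (list_abs_sum_le L _) hG0.le
      _ = (L.map (fun p => Gf n (r ^ 2 / 4) t * |EvalT (r ^ 2 / 4) t p|)).sum := by
          rw [← List.sum_map_mul_left]
      _ ≤ (L.map (fun p => |p.1| * B)).sum := List.sum_le_sum hterm
      _ = (L.map (fun p => |p.1|)).sum * B := by rw [← List.sum_map_mul_right]
      _ = M * B := by rw [hMdef]
  -- conclude
  have hrpow : r ^ (((k : ℝ) - n) / 2) = Real.sqrt r ^ k / Real.sqrt r ^ n := by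
    have h1 : (((k : ℝ) - n) / 2) = (1/2 : ℝ) * k - (1/2 : ℝ) * n := by ring
    rw [h1, Real.rpow_sub hr0, Real.sqrt_eq_rpow]
    rw [← Real.rpow_natCast (r ^ (1/2 : ℝ)) k, ← Real.rpow_natCast (r ^ (1/2 : ℝ)) n]
    rw [← Real.rpow_mul hr0.le, ← Real.rpow_mul hr0.le]
  have hexp2 : Real.exp (-x ⟨0, hn⟩ - y ⟨0, hn⟩ - r)
      = Real.exp (-x ⟨0, hn⟩ - y ⟨0, hn⟩) * Real.exp (-r) := by
    rw [← Real.exp_add]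
    congr 1
  calc c₀ * Gf n (r ^ 2 / 4) t * |(L.map (EvalT (r ^ 2 / 4) t)).sum|
      = c₀ * (Gf n (r ^ 2 / 4) t * |(L.map (EvalT (r ^ 2 / 4) t)).sum|) := by ring
    _ ≤ c₀ * (M * B) := mul_le_mul_of_nonneg_left hsum hc₀0.le
    _ ≤ ((4 * π) ^ (-(n : ℝ) / 2) * (M * Cb) + 1)
          * Real.exp (-x ⟨0, hn⟩ - y ⟨0, hn⟩ - r) * r ^ (((k : ℝ) - n) / 2) := by
        rw [hrpow, hexp2, hc₀def, hBdef]
        have hQ0 : (0:ℝ) ≤ Real.sqrt r ^ k / Real.sqrt r ^ n := by positivity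
        have hE0 : (0:ℝ) < Real.exp (-x ⟨0, hn⟩ - y ⟨0, hn⟩) := Real.exp_pos _
        have hstep : (4 * π) ^ (-(n : ℝ) / 2) * (M * Cb)
            ≤ (4 * π) ^ (-(n : ℝ) / 2) * (M * Cb) + 1 := by linarith
        calc (4 * π) ^ (-(n : ℝ) / 2) * Real.exp (-x ⟨0, hn⟩ - y ⟨0, hn⟩)
              * (M * (Cb * Real.exp (-r) * Real.sqrt r ^ k / Real.sqrt r ^ n))
            = ((4 * π) ^ (-(n : ℝ) / 2) * (M * Cb))
              * ((Real.exp (-x ⟨0, hn⟩ - y ⟨0, hn⟩) * Real.exp (-r))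
                * (Real.sqrt r ^ k / Real.sqrt r ^ n)) := by ring
          _ ≤ ((4 * π) ^ (-(n : ℝ) / 2) * (M * Cb) + 1)
              * ((Real.exp (-x ⟨0, hn⟩ - y ⟨0, hn⟩) * Real.exp (-r))
                * (Real.sqrt r ^ k / Real.sqrt r ^ n)) := by
              apply mul_le_mul_of_nonneg_right hstep
              positivity
          _ = ((4 * π) ^ (-(n : ℝ) / 2) * (M * Cb) + 1)
              * (Real.exp (-x ⟨0, hn⟩ - y ⟨0, hn⟩) * Real.exp (-r))
              * (Real.sqrt r ^ k / Real.sqrt r ^ n) := by ring
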